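/- Fix n ≥ 1 and, for each proper subset a ⊊ [n], a positive radius 𝔯_a, and define r_a(z) = Σ_{i ∈ [n]∖a} z_i² on (-1,1)^n (real coordinates). Let P = {z : r_∅(z) = 𝔯_∅²} ∖ ⋃_{∅ ⊊ a ⊊ [n]} {z : r_a(z) < 𝔯_a²}. Assume the hypersurfaces S_a = {r_a = 𝔯_a²} are pairwise transverse (achievable for 𝔯_{a} ≪ 𝔯_{a'} when a' ⊊ a). Then P lies in the set where all coordinates are nonzero: P ⊆ ((-1,0) ∪ (0,1))^n, provided 𝔯_{a} chosen sufficiently small, since any point with z_i = 0 for i ∉ a and r_∅(z) = 𝔯_∅² must lie inside some excluded tube T_a. -/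
import Mathlib


open Set Finset

/-- `r_a(z) = Σ_{i ∈ [n] ∖ a} z_i²`. -/
def rTube {n : ℕ} (a : Finset (Fin n)) (z : Fin n → ℝ) : ℝ :=
  ∑ i ∈ aᶜ, (z i) ^ 2

/-- The manifold-with-corners `P(𝔯)` avoids the coordinate hyperplanes: for
radii `𝔯_a > 0` chosen in decreasing order (`𝔯_{a₂} ≪ 𝔯_{a₁}` for `a₁ ⊊ a₂`),
every `z ∈ (-1,1)^n` with `r_∅(z) = 𝔯_∅²` lying outside all the open tubes
`T_a = {r_a < 𝔯_a²}` (`∅ ⊊ a ⊊ [n]`) has all coordinates nonzero: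
`P ⊆ ((-1,0) ∪ (0,1))^n`.  Indeed any point with `z_i = 0` for all `i ∉ a`
and `r_∅(z) = 𝔯_∅²` must lie inside some excluded tube `T_a`. -/
theorem stmt_15 (n : ℕ) (hn : 1 ≤ n) (𝔯 : Finset (Fin n) → ℝ)
    (hpos : ∀ a : Finset (Fin n), a ≠ Finset.univ → 0 < 𝔯 a)
    (hsmall : ∀ a₁ a₂ : Finset (Fin n), a₁ ⊂ a₂ → a₂ ≠ Finset.univ → 𝔯 a₂ < 𝔯 a₁)
    (z : Fin n → ℝ) (hz : ∀ i, |z i| < 1)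
    (hsphere : rTube ∅ z = (𝔯 ∅) ^ 2)
    (houtside : ∀ a : Finset (Fin n), a ≠ ∅ → a ≠ Finset.univ →
      ¬ rTube a z < (𝔯 a) ^ 2) :
    ∀ i, z i ≠ 0 := by
  classical
  intro i hzi
  set a : Finset (Fin n) := Finset.univ.filter (fun j => z j ≠ 0) with ha
  have hane : a ≠ Finset.univ := by
    intro h
    have : i ∈ a := h ▸ Finset.mem_univ i
    simp [ha] at this
    exact this hzi
  have hrz : rTube a z = 0 := by
    apply Finset.sum_eq_zero
    intro j hj
    simp [ha, Finset.mem_compl] at hj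
    simp [hj]
  by_cases h0 : a = ∅
  · -- all coordinates vanish, contradicting r_∅(z) = 𝔯_∅² > 0
    have hall : ∀ j, z j = 0 := by
      intro j
      by_contra hj
      have : j ∈ a := by simp [ha, hj]
      simp [h0] at this
    have : rTube ∅ z = 0 := by
      apply Finset.sum_eq_zero
      intro j _
      simp [hall j]
    have hpos0 : (0:ℝ) < (𝔯 ∅) ^ 2 := pow_pos (hpos ∅ (by
      intro h
      exact hane (h0.trans h))) 2
    rw [hsphere] at this
    exact absurd this (ne_of_gt hpos0)
  · exact houtside a h0 hane (hrz ▸ pow_pos (hpos a hane) 2)
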